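/- The function x ↦ (1+x)^{2/x+1} is increasing on (0, 2], and hence (1+x)^{2/x+1} ≤ 9 for all 0 < x ≤ 2. -/

import Mathlib

open Real Set

private lemma hasDerivAt_h (x : ℝ) (h1 : (0:ℝ) < 1 + x) :
    HasDerivAt (fun x : ℝ => x*(2+x)/(2*(1+x)) - Real.log (1+x))
      (x^2/(2*(1+x)^2)) x := by
  have hu : HasDerivAt (fun x : ℝ => x*(2+x)) (1*(2+x) + x*(0+1)) x :=
    (hasDerivAt_id x).mul ((hasDerivAt_const x 2).add (hasDerivAt_id x))
  have hv : HasDerivAt (fun x : ℝ => 2*(1+x)) (2*(0+1)) x :=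
    ((hasDerivAt_const x 1).add (hasDerivAt_id x)).const_mul 2
  have hvne : 2*(1+x) ≠ 0 := by positivity
  have hdiv := hu.div hv hvne
  have hlog : HasDerivAt (fun x : ℝ => Real.log (1+x)) ((0+1)/(1+x)) x :=
    (((hasDerivAt_const x 1).add (hasDerivAt_id x))).log h1.ne'
  have := hdiv.sub hlog
  refine this.congr_deriv ?_
  field_simp
  ring

private lemma log_le (x : ℝ) (hx : 0 ≤ x) :
    Real.log (1+x) ≤ x*(2+x)/(2*(1+x)) := by
  have key : MonotoneOn (fun x : ℝ => x*(2+x)/(2*(1+x)) - Real.log (1+x)) (Ici 0) := by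
    apply monotoneOn_of_deriv_nonneg (convex_Ici 0)
    · intro y hy
      have h1 : (0:ℝ) < 1 + y := by simp at hy; linarith
      exact (hasDerivAt_h y h1).continuousAt.continuousWithinAt
    · intro y hy
      rw [interior_Ici] at hy
      have h1 : (0:ℝ) < 1 + y := by simp at hy; linarith
      exact (hasDerivAt_h y h1).differentiableAt.differentiableWithinAt
    · intro y hy
      rw [interior_Ici] at hy
      have h1 : (0:ℝ) < 1 + y := by simp at hy; linarith
      rw [(hasDerivAt_h y h1).deriv]
      positivity
  have h0 := key (self_mem_Ici) (by exact hx) hx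
  simp only [Real.log_one] at h0
  norm_num at h0
  linarith

private lemma hasDerivAt_g (x : ℝ) (hx : 0 < x) :
    HasDerivAt (fun x : ℝ => (2/x + 1) * Real.log (1+x))
      ((0*x - 2*1)/x^2 * Real.log (1+x) + (2/x+1) * ((0+1)/(1+x))) x := by
  have h1 : (0:ℝ) < 1 + x := by linarith
  have hu : HasDerivAt (fun x : ℝ => 2/x + 1) ((0*x - 2*1)/x^2 + 0) x :=
    (((hasDerivAt_const x 2).div (hasDerivAt_id x) hx.ne')).add (hasDerivAt_const x 1)
  have hlog : HasDerivAt (fun x : ℝ => Real.log (1+x)) ((0+1)/(1+x)) x :=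
    (((hasDerivAt_const x 1).add (hasDerivAt_id x))).log h1.ne'
  have := hu.mul hlog
  refine this.congr_deriv ?_
  ring

private lemma g_mono :
    MonotoneOn (fun x : ℝ => (2/x + 1) * Real.log (1+x)) (Ioc 0 2) := by
  apply monotoneOn_of_deriv_nonneg (convex_Ioc 0 2)
  · intro y hy
    exact (hasDerivAt_g y hy.1).continuousAt.continuousWithinAt
  · intro y hy
    rw [interior_Ioc] at hy
    exact (hasDerivAt_g y hy.1).differentiableAt.differentiableWithinAt
  · intro y hy
    rw [interior_Ioc] at hy
    have hy0 : 0 < y := hy.1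
    have h1 : (0:ℝ) < 1 + y := by linarith
    rw [(hasDerivAt_g y hy0).deriv]
    have hL := log_le y hy0.le
    have heq : (0*y - 2*1)/y^2 * Real.log (1+y) + (2/y+1) * ((0+1)/(1+y))
        = (y*(2+y) - 2*(1+y)*Real.log (1+y)) / (y^2*(1+y)) := by
      field_simp
      ring
    rw [heq]
    apply div_nonneg _ (by positivity)
    have h2 : 2*(1+y)*Real.log (1+y) ≤ y*(2+y) := by
      have := mul_le_mul_of_nonneg_left hL (by positivity : (0:ℝ) ≤ 2*(1+y))
      calc 2*(1+y)*Real.log (1+y) ≤ 2*(1+y)*(y*(2+y)/(2*(1+y))) := this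
        _ = y*(2+y) := by field_simp
    linarith

theorem rpow_mono_and_bound :
    MonotoneOn (fun x : ℝ => (1 + x) ^ (2 / x + 1)) (Set.Ioc 0 2)
    ∧ ∀ x : ℝ, 0 < x → x ≤ 2 → (1 + x) ^ (2 / x + 1) ≤ 9 := by
  have hrw : ∀ x : ℝ, 0 < x →
      (1 + x) ^ (2 / x + 1) = Real.exp ((2/x + 1) * Real.log (1+x)) := by
    intro x hx
    rw [Real.rpow_def_of_pos (by linarith)]
    ring_nf
  have hmono : MonotoneOn (fun x : ℝ => (1 + x) ^ (2 / x + 1)) (Set.Ioc 0 2) := by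
    intro a ha b hb hab
    simp only
    rw [hrw a ha.1, hrw b hb.1, Real.exp_le_exp]
    exact g_mono ha hb hab
  refine ⟨hmono, fun x hx hx2 => ?_⟩
  have h2mem : (2:ℝ) ∈ Set.Ioc (0:ℝ) 2 := by norm_num
  have := hmono ⟨hx, hx2⟩ h2mem hx2
  simp only at this
  calc (1 + x) ^ (2 / x + 1) ≤ (1 + 2) ^ (2 / 2 + 1 : ℝ) := this
    _ = 9 := by
      rw [show (2/2+1 : ℝ) = 2 by norm_num, show ((1:ℝ)+2) = 3 by norm_num,
        Real.rpow_two]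
      norm_num
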